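/- Fix 0 < α < 1, −1 ≤ λ ≤ 1, t > 0, and −1 < β < α. Let Z1, Z2 be independent standard normal random variables, and for β' with −1 ≤ β' ≤ β set X = Z1 and Y = β'·Z1 + √(1−β'²)·Z2. Then Pr[X ≥ t ∧ Y ≥ α^λ · t] ≤ e^{-Δ²/2} where Δ² = (1 + (α^λ − β)²/(1−β²)) · t². -/

import Mathlib

open MeasureTheory ProbabilityTheory
open Real

lemma gauss_exp_lintegral (c : ℝ) :
    ∫⁻ x, ENNReal.ofReal (Real.exp (c * x)) ∂(gaussianReal 0 1)
      = ENNReal.ofReal (Real.exp (c ^ 2 / 2)) := by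
  have hsq : Real.sqrt (2 * π) ≠ 0 :=
    ne_of_gt (Real.sqrt_pos.2 (by positivity))
  have hpt : ∀ x : ℝ, gaussianPDFReal 0 1 x * Real.exp (c * x)
      = (Real.exp (c ^ 2 / 2) * (Real.sqrt (2 * π))⁻¹) * Real.exp (-(1/2) * (x - c) ^ 2) := by
    intro x
    simp only [gaussianPDFReal, NNReal.coe_one, mul_one, sub_zero]
    rw [mul_assoc, ← Real.exp_add, show -x ^ 2 / 2 + c * x = c ^ 2 / 2 + (-(1/2) * (x - c) ^ 2) by ring,
      Real.exp_add]
    ring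
  have hint0 : Integrable (fun x : ℝ => Real.exp (-(1/2) * (x - c) ^ 2)) := by
    exact (integrable_exp_neg_mul_sq (by norm_num : (0:ℝ) < 1/2)).comp_sub_right c
  have hint : Integrable (fun x : ℝ => gaussianPDFReal 0 1 x * Real.exp (c * x)) := by
    refine Integrable.congr (hint0.const_mul (Real.exp (c ^ 2 / 2) * (Real.sqrt (2 * π))⁻¹)) ?_
    filter_upwards with x using (hpt x).symm
  have hval : ∫ x, gaussianPDFReal 0 1 x * Real.exp (c * x) = Real.exp (c ^ 2 / 2) := by
    simp_rw [hpt]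
    rw [integral_const_mul]
    have : ∫ x : ℝ, Real.exp (-(1/2) * (x - c) ^ 2) = Real.sqrt (2 * π) := by
      rw [integral_sub_right_eq_self (fun x => Real.exp (-(1/2) * x ^ 2)) c, integral_gaussian,
        show π / (1/2 : ℝ) = 2 * π by ring]
    rw [this]
    field_simp
  rw [gaussianReal_of_var_ne_zero 0 one_ne_zero,
    lintegral_withDensity_eq_lintegral_mul _ (measurable_gaussianPDF 0 1)
      (by fun_prop : Measurable fun x : ℝ => ENNReal.ofReal (Real.exp (c * x)))]
  have : ∀ x : ℝ, (gaussianPDF 0 1 * fun x => ENNReal.ofReal (Real.exp (c * x))) x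
      = ENNReal.ofReal (gaussianPDFReal 0 1 x * Real.exp (c * x)) := by
    intro x
    simp only [Pi.mul_apply, gaussianPDF]
    rw [← ENNReal.ofReal_mul (gaussianPDFReal_nonneg 0 1 x)]
  rw [lintegral_congr this,
    ← ofReal_integral_eq_lintegral_ofReal hint
      (ae_of_all _ fun x => mul_nonneg (gaussianPDFReal_nonneg 0 1 x) (Real.exp_nonneg _)),
    hval]

/-- Bivariate Gaussian tail upper bound: for standard normals `X = Z1` and
`Y = β'·Z1 + √(1-β'²)·Z2` with correlation `β' ≤ β < α`,
`Pr[X ≥ t ∧ Y ≥ α^λ·t] ≤ e^{-Δ²/2}` where `Δ² = (1 + (α^λ-β)²/(1-β²))·t²`. -/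
theorem bivariate_tail_upper (α lam t β β' : ℝ) (hα0 : 0 < α) (hα1 : α < 1)
    (hlam : lam ∈ Set.Icc (-1 : ℝ) 1) (ht : 0 < t) (hβ : -1 < β) (hβα : β < α)
    (hβ'lo : -1 ≤ β') (hβ'hi : β' ≤ β) :
    ((gaussianReal 0 1).prod (gaussianReal 0 1))
        {z : ℝ × ℝ | t ≤ z.1 ∧ α ^ lam * t ≤ β' * z.1 + Real.sqrt (1 - β' ^ 2) * z.2}
      ≤ ENNReal.ofReal
          (Real.exp (-((1 + (α ^ lam - β) ^ 2 / (1 - β ^ 2)) * t ^ 2) / 2)) := by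
  have hβ1 : β < 1 := lt_trans hβα hα1
  have hD : (0:ℝ) < 1 - β ^ 2 := by nlinarith
  set a := α ^ lam with hadef
  have ha_lb : α ≤ a := by
    have := Real.rpow_le_rpow_of_exponent_ge hα0 hα1.le hlam.2
    rwa [Real.rpow_one] at this
  have ha_ub : a ≤ α⁻¹ := by
    have := Real.rpow_le_rpow_of_exponent_ge hα0 hα1.le hlam.1
    rwa [Real.rpow_neg_one] at this
  have ha0 : 0 < a := lt_of_lt_of_le hα0 ha_lb
  have hβa : β < a := lt_of_lt_of_le hβα ha_lb
  have hba : β * a < 1 := by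
    rcases le_or_gt β 0 with h | h
    · nlinarith
    · have h1 : β * a ≤ β * α⁻¹ := by nlinarith
      have h2 : β * α⁻¹ < α * α⁻¹ := by
        apply mul_lt_mul_of_pos_right hβα (inv_pos.2 hα0)
      rw [mul_inv_cancel₀ (ne_of_gt hα0)] at h2
      linarith
  set u := (1 - β * a) * t / (1 - β ^ 2) with hudef
  set v := (a - β) * t / (1 - β ^ 2) with hvdef
  have hu : 0 ≤ u := by
    rw [hudef]; exact div_nonneg (mul_nonneg (by linarith) ht.le) hD.le
  have hv : 0 ≤ v := by
    rw [hvdef]; exact div_nonneg (mul_nonneg (by linarith) ht.le) hD.le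
  set s := Real.sqrt (1 - β' ^ 2) with hsdef
  have hs2 : s ^ 2 = 1 - β' ^ 2 := Real.sq_sqrt (by nlinarith)
  set c1 := u + v * β' with hc1def
  set c2 := v * s with hc2def
  set K := -(u * t + v * (a * t)) with hKdef
  set μ := gaussianReal 0 1 with hμdef
  have hmeas : Measurable fun z : ℝ × ℝ => ENNReal.ofReal (Real.exp (c1 * z.1 + c2 * z.2 + K)) := by
    fun_prop
  calc (μ.prod μ) {z : ℝ × ℝ | t ≤ z.1 ∧ a * t ≤ β' * z.1 + s * z.2}
      = ∫⁻ z in {z : ℝ × ℝ | t ≤ z.1 ∧ a * t ≤ β' * z.1 + s * z.2}, 1 ∂(μ.prod μ) :=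
        (setLIntegral_one _).symm
    _ ≤ ∫⁻ z in {z : ℝ × ℝ | t ≤ z.1 ∧ a * t ≤ β' * z.1 + s * z.2},
          ENNReal.ofReal (Real.exp (c1 * z.1 + c2 * z.2 + K)) ∂(μ.prod μ) := by
        refine setLIntegral_mono hmeas fun z hz => ?_
        have hz1 := hz.1
        have hz2 := hz.2
        have hexp : (0:ℝ) ≤ c1 * z.1 + c2 * z.2 + K := by
          have : c1 * z.1 + c2 * z.2 + K
              = u * (z.1 - t) + v * ((β' * z.1 + s * z.2) - a * t) := by
            rw [hc1def, hc2def, hKdef]; ring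
          rw [this]
          have h1 : 0 ≤ u * (z.1 - t) := mul_nonneg hu (by linarith)
          have h2 : 0 ≤ v * ((β' * z.1 + s * z.2) - a * t) := mul_nonneg hv (by linarith)
          linarith
        calc (1 : ENNReal) = ENNReal.ofReal (Real.exp 0) := by simp
          _ ≤ _ := ENNReal.ofReal_le_ofReal (Real.exp_le_exp.2 hexp)
    _ ≤ ∫⁻ z, ENNReal.ofReal (Real.exp (c1 * z.1 + c2 * z.2 + K)) ∂(μ.prod μ) :=
        setLIntegral_le_lintegral _ _
    _ = ∫⁻ z, (ENNReal.ofReal (Real.exp (c1 * z.1)) * ENNReal.ofReal (Real.exp (c2 * z.2)))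
          * ENNReal.ofReal (Real.exp K) ∂(μ.prod μ) := by
        refine lintegral_congr fun z => ?_
        rw [Real.exp_add, Real.exp_add,
          ENNReal.ofReal_mul (by positivity), ENNReal.ofReal_mul (Real.exp_nonneg _)]
    _ = (∫⁻ z, ENNReal.ofReal (Real.exp (c1 * z.1)) * ENNReal.ofReal (Real.exp (c2 * z.2))
          ∂(μ.prod μ)) * ENNReal.ofReal (Real.exp K) :=
        lintegral_mul_const' _ _ ENNReal.ofReal_ne_top
    _ = (ENNReal.ofReal (Real.exp (c1 ^ 2 / 2)) * ENNReal.ofReal (Real.exp (c2 ^ 2 / 2)))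
          * ENNReal.ofReal (Real.exp K) := by
        congr 1
        rw [lintegral_prod _ (by fun_prop)]
        simp_rw [lintegral_const_mul' _ _ ENNReal.ofReal_ne_top, hμdef, gauss_exp_lintegral c2]
        rw [lintegral_mul_const' _ _ ENNReal.ofReal_ne_top, gauss_exp_lintegral c1]
    _ = ENNReal.ofReal (Real.exp (c1 ^ 2 / 2 + c2 ^ 2 / 2 + K)) := by
        rw [Real.exp_add, Real.exp_add,
          ENNReal.ofReal_mul (by positivity), ENNReal.ofReal_mul (Real.exp_nonneg _)]
    _ ≤ ENNReal.ofReal (Real.exp (-((1 + (a - β) ^ 2 / (1 - β ^ 2)) * t ^ 2) / 2)) := by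
        refine ENNReal.ofReal_le_ofReal (Real.exp_le_exp.2 ?_)
        have hid : (u ^ 2 + 2 * u * v * β + v ^ 2) / 2 - u * t - v * (a * t)
            = -((1 + (a - β) ^ 2 / (1 - β ^ 2)) * t ^ 2) / 2 := by
          rw [hudef, hvdef]
          field_simp
          ring
        have hmono : u * v * β' ≤ u * v * β :=
          mul_le_mul_of_nonneg_left hβ'hi (mul_nonneg hu hv)
        have hexpand : c1 ^ 2 / 2 + c2 ^ 2 / 2 + K
            = (u ^ 2 + 2 * u * v * β' + v ^ 2) / 2 - u * t - v * (a * t) := by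
          rw [hc1def, hc2def, hKdef]
          have : (v * s) ^ 2 = v ^ 2 * (1 - β' ^ 2) := by rw [mul_pow, hs2]
          rw [this]; ring
        rw [hexpand]
        linarith
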